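/- Let q ≥ 2. Define sequences a_1(n), ..., a_q(n) by a_1(0) = ... = a_{q-1}(0) = 0, a_q(0) = 1, and for n ≥ 0: a_ℓ(n+1) = a_{ℓ+1}(n) for 1 ≤ ℓ < q, and a_q(n+1) = 2·a_1(n) + a_2(n) + ... + a_q(n). Then for all k ≥ 0 and 0 ≤ r < q, writing j = kq + r, we have a_1(j) = (2^j - 2^r)/(2^q - 1) if r < q - 1, and a_1(j) = 1 + (2^j - 2^{q-1})/(2^q - 1) if r = q - 1. -/

import Mathlib

def del (q n : ℕ) : ℚ :=
  if n % q = q - 2 then 1 else if n % q = q - 1 then -1 else 0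

lemma del_per (q n : ℕ) : del q (n + q) = del q n := by
  unfold del
  rw [Nat.add_mod_right]

lemma del_full (p : ℕ) : ∑ j ∈ Finset.range (p + 2), del (p + 2) j = 0 := by
  have hpt : ∀ j ∈ Finset.range (p + 2), del (p + 2) j
      = (if j = p then (1 : ℚ) else 0) + (if j = p + 1 then (-1 : ℚ) else 0) := by
    intro j hj
    simp only [Finset.mem_range] at hj
    unfold del
    have e2 : p + 2 - 2 = p := by omega
    have e1 : p + 2 - 1 = p + 1 := by omega
    rw [Nat.mod_eq_of_lt hj, e2, e1]
    rcases eq_or_ne j p with h1 | h1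
    · have h2 : j ≠ p + 1 := by omega
      simp [h1, h2]
    · rcases eq_or_ne j (p + 1) with h2 | h2 <;> simp [h1, h2]
  rw [Finset.sum_congr rfl hpt, Finset.sum_add_distrib]
  rw [Finset.sum_ite_eq' (Finset.range (p + 2)) p (fun _ => (1 : ℚ))]
  rw [Finset.sum_ite_eq' (Finset.range (p + 2)) (p + 1) (fun _ => (-1 : ℚ))]
  rw [if_pos (Finset.mem_range.mpr (show p < p + 2 by omega))]
  rw [if_pos (Finset.mem_range.mpr (show p + 1 < p + 2 by omega))]
  ring

lemma del_window (p : ℕ) :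
    ∀ m, del (p + 2) m + ∑ j ∈ Finset.range (p + 1), del (p + 2) (m + 1 + j) = 0 := by
  intro m
  induction m with
  | zero =>
    have hfull := del_full p
    have hsplit : ∑ j ∈ Finset.range (p + 2), del (p + 2) j
        = (∑ j ∈ Finset.range (p + 1), del (p + 2) (j + 1)) + del (p + 2) 0 :=
      Finset.sum_range_succ' (fun j => del (p + 2) j) (p + 1)
    have hc : ∑ j ∈ Finset.range (p + 1), del (p + 2) (0 + 1 + j)
        = ∑ j ∈ Finset.range (p + 1), del (p + 2) (j + 1) := by
      apply Finset.sum_congr rfl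
      intro j _
      congr 1
      omega
    rw [hc]
    linarith [hfull, hsplit]
  | succ m ih =>
    have h1 : ∑ j ∈ Finset.range (p + 1), del (p + 2) (m + 1 + j)
        = (∑ j ∈ Finset.range p, del (p + 2) (m + 1 + (j + 1))) + del (p + 2) (m + 1 + 0) :=
      Finset.sum_range_succ' (fun j => del (p + 2) (m + 1 + j)) p
    have h2 : ∑ j ∈ Finset.range (p + 1), del (p + 2) (m + 1 + 1 + j)
        = (∑ j ∈ Finset.range p, del (p + 2) (m + 1 + 1 + j)) + del (p + 2) (m + 1 + 1 + p) :=
      Finset.sum_range_succ (fun j => del (p + 2) (m + 1 + 1 + j)) p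
    have h3 : ∑ j ∈ Finset.range p, del (p + 2) (m + 1 + (j + 1))
        = ∑ j ∈ Finset.range p, del (p + 2) (m + 1 + 1 + j) := by
      apply Finset.sum_congr rfl
      intro j _
      congr 1
      omega
    have h4 : del (p + 2) (m + 1 + 1 + p) = del (p + 2) m := by
      rw [show m + 1 + 1 + p = m + (p + 2) by omega]
      exact del_per (p + 2) m
    have h5 : del (p + 2) (m + 1 + 0) = del (p + 2) (m + 1) := by norm_num
    linarith [ih, h1, h2, h3, h4, h5]

theorem matrix_recursion_first_coordinate
    (q : ℕ) (hq : 2 ≤ q) (a : ℕ → ℕ → ℕ)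
    (h0 : ∀ ℓ, 1 ≤ ℓ → ℓ < q → a ℓ 0 = 0)
    (hq0 : a q 0 = 1)
    (hstep : ∀ ℓ n, 1 ≤ ℓ → ℓ < q → a ℓ (n + 1) = a (ℓ + 1) n)
    (hqstep : ∀ n, a q (n + 1) = 2 * a 1 n + ∑ ℓ ∈ Finset.Icc 2 q, a ℓ n) :
    ∀ k r : ℕ, r < q →
      (if r < q - 1 then
        ((a 1 (k * q + r) : ℚ) = ((2 : ℚ) ^ (k * q + r) - 2 ^ r) / (2 ^ q - 1))
      else
        ((a 1 (k * q + r) : ℚ) = 1 + ((2 : ℚ) ^ (k * q + r) - 2 ^ (q - 1)) / (2 ^ q - 1))) := by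
  obtain ⟨p, rfl⟩ : ∃ p, q = p + 2 := ⟨q - 2, by omega⟩
  have shift : ∀ i, i < p + 2 → ∀ m, a (i + 1) m = a 1 (m + i) := by
    intro i
    induction i with
    | zero => intro _ m; simp
    | succ i ih =>
      intro hi m
      have h1 := hstep (i + 1) m (by omega) (by omega)
      rw [← h1, ih (by omega) (m + 1)]
      congr 1
      omega
  have shiftq : ∀ ℓ m, 1 ≤ ℓ → ℓ ≤ p + 2 → a ℓ m = a 1 (m + ℓ - 1) := by
    intro ℓ m h1 h2
    have h := shift (ℓ - 1) (by omega) m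
    rw [show ℓ - 1 + 1 = ℓ by omega] at h
    rw [h]
    congr 1
    omega
  have base0 : ∀ j, j < p + 1 → a 1 j = 0 := by
    intro j hj
    have h := shift j (by omega) 0
    rw [Nat.zero_add] at h
    rw [← h]
    exact h0 (j + 1) (by omega) (by omega)
  have base1 : a 1 (p + 1) = 1 := by
    have h := shift (p + 1) (by omega) 0
    rw [Nat.zero_add] at h
    rw [← h]
    exact hq0
  have recq : ∀ n, (a 1 (n + (p + 2)) : ℚ)
      = 2 * (a 1 n : ℚ) + ∑ j ∈ Finset.range (p + 1), (a 1 (n + 1 + j) : ℚ) := by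
    intro n
    have h2 := shiftq (p + 2) (n + 1) (by omega) le_rfl
    rw [show n + 1 + (p + 2) - 1 = n + (p + 2) by omega] at h2
    have h3 : ∑ ℓ ∈ Finset.Icc 2 (p + 2), a ℓ n
        = ∑ j ∈ Finset.range (p + 1), a 1 (n + 1 + j) := by
      rw [← Finset.Ico_add_one_right_eq_Icc, Finset.sum_Ico_eq_sum_range]
      apply Finset.sum_congr (by rw [show p + 2 + 1 - 2 = p + 1 by omega])
      intro j hj
      simp only [Finset.mem_range] at hj
      rw [shiftq (2 + j) n (by omega) (by omega)]
      congr 1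
      omega
    rw [← h2, hqstep n, h3]
    push_cast
    ring
  have cq : a 1 (p + 2) = 1 := by
    have h := recq 0
    simp only [Nat.zero_add] at h
    have hz : ∀ b ∈ Finset.range (p + 1), b ≠ p → (a 1 (1 + b) : ℚ) = 0 := by
      intro b hb hne
      simp only [Finset.mem_range] at hb
      rw [base0 (1 + b) (by omega)]
      norm_num
    rw [Finset.sum_eq_single_of_mem p (Finset.mem_range.mpr (by omega)) hz] at h
    rw [show 1 + p = p + 1 by omega, base1, base0 0 (by omega)] at h
    have h2 : (a 1 (p + 2) : ℚ) = 1 := by rw [h]; norm_num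
    exact_mod_cast h2
  have hD : (2 : ℚ) ^ (p + 2) - 1 ≠ 0 := by
    have h1 : (1 : ℚ) ≤ 2 ^ p := one_le_pow₀ (by norm_num)
    have h2 : (2 : ℚ) ^ (p + 2) = 4 * 2 ^ p := by ring
    intro hcon
    rw [h2] at hcon
    nlinarith [h1]
  have step : ∀ n, (a 1 (n + 1) : ℚ) = 2 * (a 1 n : ℚ) + del (p + 2) n := by
    intro n
    induction n using Nat.strong_induction_on with
    | _ n ih =>
      rcases lt_or_ge n (p + 2) with hn | hn
      · have hnm : n % (p + 2) = n := Nat.mod_eq_of_lt hn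
        rcases lt_trichotomy n p with h | h | h
        · rw [base0 n (by omega), base0 (n + 1) (by omega)]
          unfold del
          rw [hnm, if_neg (show ¬ n = p + 2 - 2 by omega),
              if_neg (show ¬ n = p + 2 - 1 by omega)]
          norm_num
        · rw [show n + 1 = p + 1 by omega, base1, base0 n (by omega)]
          unfold del
          rw [hnm, if_pos (show n = p + 2 - 2 by omega)]
          norm_num
        · have h1 : n = p + 1 := by omega
          subst h1
          have hc : a 1 (p + 1 + 1) = 1 := cq
          rw [hc, base1]
          unfold del
          rw [hnm, if_neg (show ¬ p + 1 = p + 2 - 2 by omega),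
              if_pos (show p + 1 = p + 2 - 1 by omega)]
          norm_num
      · obtain ⟨m, rfl⟩ : ∃ m, n = m + (p + 2) := ⟨n - (p + 2), by omega⟩
        have h1 := recq (m + 1)
        have h2 := recq m
        have ihm := ih m (by omega)
        have hsum : ∑ j ∈ Finset.range (p + 1), (a 1 (m + 1 + 1 + j) : ℚ)
            = 2 * ∑ j ∈ Finset.range (p + 1), (a 1 (m + 1 + j) : ℚ)
              + ∑ j ∈ Finset.range (p + 1), del (p + 2) (m + 1 + j) := by
          rw [Finset.mul_sum, ← Finset.sum_add_distrib]
          apply Finset.sum_congr rfl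
          intro j hj
          simp only [Finset.mem_range] at hj
          rw [show m + 1 + 1 + j = m + 1 + j + 1 by omega]
          exact ih (m + 1 + j) (by omega)
        have hwin := del_window p m
        have hper := del_per (p + 2) m
        rw [show m + (p + 2) + 1 = m + 1 + (p + 2) by omega]
        linarith [h1, h2, ihm, hsum, hwin, hper]
  have main : ∀ n, (a 1 n : ℚ)
      = ((2 : ℚ) ^ n - 2 ^ (n % (p + 2))) / (2 ^ (p + 2) - 1)
        + (if n % (p + 2) = p + 1 then 1 else 0) := by
    intro n
    induction n with
    | zero =>
      rw [base0 0 (by omega), Nat.zero_mod, if_neg (show ¬ (0 : ℕ) = p + 1 by omega)]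
      norm_num
    | succ n ih =>
      obtain ⟨r, hr⟩ : ∃ r, n % (p + 2) = r := ⟨_, rfl⟩
      have hlt : r < p + 2 := by rw [← hr]; exact Nat.mod_lt _ (by omega)
      have hdel : del (p + 2) n = if r = p then 1 else if r = p + 1 then -1 else 0 := by
        unfold del
        rw [hr, show p + 2 - 2 = p by omega, show p + 2 - 1 = p + 1 by omega]
      have hmod : (n + 1) % (p + 2) = (r + 1) % (p + 2) := by
        rw [Nat.add_mod, hr, Nat.mod_eq_of_lt (show 1 < p + 2 by omega)]
      rw [step n, ih, hdel, hr]
      rcases Nat.lt_trichotomy r p with h | h | h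
      · rw [hmod, Nat.mod_eq_of_lt (show r + 1 < p + 2 by omega)]
        rw [if_neg (show ¬ r = p + 1 by omega), if_neg (show ¬ r = p by omega),
            if_neg (show ¬ r = p + 1 by omega), if_neg (show ¬ r + 1 = p + 1 by omega)]
        field_simp
        ring
      · rw [hmod, Nat.mod_eq_of_lt (show r + 1 < p + 2 by omega)]
        rw [if_neg (show ¬ r = p + 1 by omega), if_pos h,
            if_pos (show r + 1 = p + 1 by omega)]
        field_simp
        ring
      · have hr1 : r = p + 1 := by omega
        subst hr1
        have hm0 : (n + 1) % (p + 2) = 0 := by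
          rw [hmod, show p + 1 + 1 = p + 2 by omega, Nat.mod_self]
        rw [hm0, if_pos rfl, if_neg (show ¬ p + 1 = p by omega), if_pos rfl,
            if_neg (show ¬ (0 : ℕ) = p + 1 by omega)]
        field_simp
        ring
  intro k r hkr
  have hmod : (k * (p + 2) + r) % (p + 2) = r := by
    rw [add_comm, Nat.add_mul_mod_self_right, Nat.mod_eq_of_lt hkr]
  have hm := main (k * (p + 2) + r)
  rw [hmod] at hm
  split_ifs with hcase
  · rw [hm, if_neg (show ¬ r = p + 1 by omega)]
    ring
  · have hr1 : r = p + 1 := by omega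
    subst hr1
    rw [hm, if_pos rfl, show p + 2 - 1 = p + 1 by omega]
    ring
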